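/- arXiv:1710.07182 — 2 statements merged into one kernel-verified Lean document; each statement's English description precedes it below -/
import Mathlib

section
/- Let P be integrable on [a,b] and m a nonnegative integer. Suppose ∫_a^b P(y)(b-y)^i/i! dy = 0 for all i ∈ {0,1,...,m} and ∫_a^s P(y)(s-y)^m/m! dy ≥ 0 for all s ∈ [a,b]. Then ∫_a^b P(y)f(y) dy ≥ 0 for every f ∈ C^{m+1}([a,b]) satisfying (-1)^{m+1} f^{(m+1)} ≥ 0 on [a,b]. -/
open MeasureTheory intervalIntegral Set

lemma fubini_triangle {a b : ℝ} (hab : a ≤ b) (K : ℝ → ℝ → ℝ)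
    (hK : Integrable (Function.uncurry K)
      ((volume.restrict (Icc a b)).prod (volume.restrict (Icc a b)))) :
    IntegrableOn (fun y => ∫ t in y..b, K y t) (Icc a b) volume ∧
    ∫ y in a..b, (∫ t in y..b, K y t) = ∫ t in a..b, (∫ y in a..t, K y t) := by
  set μ : Measure ℝ := volume.restrict (Icc a b) with hμ
  have hsmeas : MeasurableSet {p : ℝ × ℝ | p.1 ≤ p.2} :=
    (isClosed_le continuous_fst continuous_snd).measurableSet
  set F : ℝ → ℝ → ℝ := fun y t => ({p : ℝ × ℝ | p.1 ≤ p.2}.indicator (Function.uncurry K)) (y, t)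
    with hF
  have hFint : Integrable (Function.uncurry F) (μ.prod μ) := by
    have : Function.uncurry F = {p : ℝ × ℝ | p.1 ≤ p.2}.indicator (Function.uncurry K) := rfl
    rw [this]
    exact hK.indicator hsmeas
  have key := integral_integral_swap hFint
  have hpt : ∀ y ∈ Icc a b, ∫ t in y..b, K y t = ∫ t, F y t ∂μ := by
    intro y hy
    have h1 : ∫ t in y..b, K y t = ∫ t in Icc y b, K y t := by
      rw [integral_of_le hy.2, integral_Icc_eq_integral_Ioc]
    rw [h1]
    have h2 : Icc y b = Ici y ∩ Icc a b := by
      ext t; simp only [mem_Icc, mem_inter_iff, mem_Ici]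
      constructor
      · rintro ⟨h, h'⟩; exact ⟨h, le_trans hy.1 h, h'⟩
      · rintro ⟨h, _, h'⟩; exact ⟨h, h'⟩
    rw [h2, ← Measure.restrict_restrict measurableSet_Ici, ← hμ,
      ← MeasureTheory.integral_indicator measurableSet_Ici]
    refine integral_congr_ae (Filter.Eventually.of_forall fun t => ?_)
    simp only [indicator_apply, hF, Function.uncurry, mem_Ici, mem_setOf_eq]
  constructor
  · have hI : Integrable (fun y => ∫ t, F y t ∂μ) μ := hFint.integral_prod_left
    exact hI.congr ((ae_restrict_iff' measurableSet_Icc).mpr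
      (Filter.Eventually.of_forall fun y hy => (hpt y hy).symm))
  have hL : ∫ y in a..b, (∫ t in y..b, K y t) = ∫ x, ∫ y, F x y ∂μ ∂μ := by
    rw [integral_of_le hab, ← integral_Icc_eq_integral_Ioc, hμ]
    exact setIntegral_congr_fun measurableSet_Icc hpt
  have hR : ∫ t in a..b, (∫ y in a..t, K y t) = ∫ y, ∫ x, F x y ∂μ ∂μ := by
    rw [integral_of_le hab, ← integral_Icc_eq_integral_Ioc, hμ]
    refine setIntegral_congr_fun measurableSet_Icc (fun t ht => ?_)
    have h1 : ∫ y in a..t, K y t = ∫ y in Icc a t, K y t := by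
      rw [integral_of_le ht.1, integral_Icc_eq_integral_Ioc]
    rw [h1]
    have h2 : Icc a t = Iic t ∩ Icc a b := by
      ext y; simp only [mem_Icc, mem_inter_iff, mem_Iic]
      constructor
      · rintro ⟨h, h'⟩; exact ⟨h', h, le_trans h' ht.2⟩
      · rintro ⟨h, h', _⟩; exact ⟨h', h⟩
    rw [h2, ← Measure.restrict_restrict measurableSet_Iic, ← hμ,
      ← MeasureTheory.integral_indicator measurableSet_Iic]
    refine integral_congr_ae (Filter.Eventually.of_forall fun y => ?_)
    simp only [indicator_apply, hF, Function.uncurry, mem_Iic, mem_setOf_eq]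
  rw [hL, hR, key]

lemma taylor_int_remainder {a b : ℝ} (hab : a < b) {m : ℕ} {f : ℝ → ℝ}
    (hf : ContDiffOn ℝ (m + 1) f (Icc a b)) {y : ℝ} (hy : y ∈ Icc a b) :
    f y = taylorWithinEval f m (Icc a b) b y -
      ∫ t in y..b, ((y - t) ^ m / m.factorial) *
        iteratedDerivWithin (m + 1) f (Icc a b) t := by
  have hg_cont : ContinuousOn (iteratedDerivWithin (m + 1) f (Icc a b)) (Icc a b) :=
    hf.continuousOn_iteratedDerivWithin (by exact_mod_cast le_rfl) (uniqueDiffOn_Icc hab)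
  have hfm : ContDiffOn ℝ m f (Icc a b) := hf.of_le (by norm_cast; exact Nat.le_succ m)
  have hf' : DifferentiableOn ℝ (iteratedDerivWithin m f (Icc a b)) (Icc a b) :=
    hf.differentiableOn_iteratedDerivWithin (by exact_mod_cast Nat.lt_succ_self m)
      (uniqueDiffOn_Icc hab)
  have hFTC := intervalIntegral.integral_eq_sub_of_hasDeriv_right_of_le
    (f := fun t => taylorWithinEval f m (Icc a b) t y)
    (f' := fun t => (((m.factorial : ℝ))⁻¹ * (y - t) ^ m) •
      iteratedDerivWithin (m + 1) f (Icc a b) t)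
    hy.2
    ((continuousOn_taylorWithinEval (uniqueDiffOn_Icc hab) hfm).mono
      (Icc_subset_Icc hy.1 le_rfl))
    (fun x hx => by
      have hx' : x ∈ Icc a b := ⟨le_trans hy.1 hx.1.le, hx.2.le⟩
      have H := hasDerivWithinAt_taylorWithinEval_at_Icc (n := m) y hab hx' hfm hf'
      have hnhds : Icc a b ∈ nhds x := Icc_mem_nhds (lt_of_le_of_lt hy.1 hx.1) hx.2
      exact ((H.hasDerivAt hnhds).hasDerivWithinAt))
    (by
      apply ContinuousOn.intervalIntegrable
      apply ContinuousOn.fun_smul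
      · exact continuousOn_const.mul ((continuousOn_const.sub continuousOn_id).pow m)
      · refine hg_cont.mono ?_
        rw [uIcc_of_le hy.2]
        exact Icc_subset_Icc hy.1 le_rfl)
  rw [taylorWithinEval_self] at hFTC
  have heq : ∫ t in y..b, ((y - t) ^ m / m.factorial) *
      iteratedDerivWithin (m + 1) f (Icc a b) t
      = ∫ t in y..b, (((m.factorial : ℝ))⁻¹ * (y - t) ^ m) •
        iteratedDerivWithin (m + 1) f (Icc a b) t := by
    refine integral_congr (fun t _ => ?_)
    rw [smul_eq_mul]; ring
  rw [heq, hFTC]; ring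

theorem stmt_1 (a b : ℝ) (hab : a < b) (m : ℕ) (P : ℝ → ℝ)
    (hP : IntervalIntegrable P volume a b)
    (hmom : ∀ i ≤ m, ∫ y in a..b, P y * (b - y) ^ i / (Nat.factorial i) = 0)
    (hpos : ∀ s ∈ Set.Icc a b, 0 ≤ ∫ y in a..s, P y * (s - y) ^ m / (Nat.factorial m)) :
    ∀ f : ℝ → ℝ, ContDiffOn ℝ (m + 1) f (Set.Icc a b) →
      (∀ y ∈ Set.Icc a b, 0 ≤ (-1 : ℝ) ^ (m + 1) * iteratedDerivWithin (m + 1) f (Set.Icc a b) y) →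
      0 ≤ ∫ y in a..b, P y * f y := by
  intro f hf hsign
  set g : ℝ → ℝ := iteratedDerivWithin (m + 1) f (Icc a b) with hg
  set K : ℝ → ℝ → ℝ := fun y t => P y * (t - y) ^ m / (Nat.factorial m) * g t with hKdef
  set μ : Measure ℝ := volume.restrict (Icc a b) with hμ
  haveI : IsFiniteMeasure μ := by
    constructor
    rw [hμ, Measure.restrict_apply_univ]
    exact measure_Icc_lt_top
  have hg_cont : ContinuousOn g (Icc a b) :=
    hf.continuousOn_iteratedDerivWithin (by exact_mod_cast le_rfl) (uniqueDiffOn_Icc hab)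
  have hPI : IntegrableOn P (Icc a b) volume := by
    rw [integrableOn_Icc_iff_integrableOn_Ioc]
    exact (intervalIntegrable_iff_integrableOn_Ioc_of_le hab.le).mp hP
  have hPμ : Integrable P μ := hPI
  -- boundedness of g
  obtain ⟨C, hC⟩ := isCompact_Icc.exists_bound_of_continuousOn hg_cont
  set M : ℝ := (b - a) ^ m / (Nat.factorial m) * max C 0 with hM
  -- integrability of uncurry K on the product
  have hKint : Integrable (Function.uncurry K) (μ.prod μ) := by
    have hgae : AEStronglyMeasurable g μ := hg_cont.aestronglyMeasurable measurableSet_Icc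
    have hmeas : AEStronglyMeasurable (Function.uncurry K) (μ.prod μ) := by
      have heqK : Function.uncurry K = fun p : ℝ × ℝ =>
          (P p.1) * (((p.2 - p.1) ^ m / (Nat.factorial m)) * g p.2) := by
        funext p
        simp only [Function.uncurry, hKdef]
        ring
      rw [heqK]
      have hc : Continuous (fun p : ℝ × ℝ => (p.2 - p.1) ^ m / (Nat.factorial m)) := by fun_prop
      exact (MeasureTheory.AEStronglyMeasurable.comp_fst hPμ.aestronglyMeasurable).mul
        (hc.aestronglyMeasurable.mul (MeasureTheory.AEStronglyMeasurable.comp_snd hgae))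
    have hbound : Integrable (fun p : ℝ × ℝ => |P p.1| * M) (μ.prod μ) :=
      hPμ.abs.mul_prod (integrable_const M)
    refine hbound.mono' hmeas ?_
    have hprod : μ.prod μ = (volume.prod volume).restrict ((Icc a b) ×ˢ (Icc a b)) := by
      rw [hμ, Measure.prod_restrict]
    rw [hprod]
    refine (ae_restrict_iff' (measurableSet_Icc.prod measurableSet_Icc)).mpr
      (Filter.Eventually.of_forall ?_)
    rintro ⟨y, t⟩ ⟨hy, ht⟩
    simp only [Function.uncurry, hKdef, Real.norm_eq_abs]
    have habs : |t - y| ≤ b - a := by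
      rw [abs_sub_le_iff]
      constructor <;> [skip; skip] <;>
        · simp only [mem_Icc] at hy ht; linarith [hy.1, hy.2, ht.1, ht.2]
    have hgb : |g t| ≤ max C 0 := le_trans (by simpa [Real.norm_eq_abs] using hC t ht)
      (le_max_left _ _)
    calc |P y * (t - y) ^ m / (Nat.factorial m) * g t|
        = |P y| * (|t - y| ^ m / (Nat.factorial m) * |g t|) := by
          rw [abs_mul, abs_div, abs_mul, abs_pow, Nat.abs_cast]; ring
      _ ≤ |P y| * ((b - a) ^ m / (Nat.factorial m) * max C 0) := by
          gcongr <;> first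
            | exact habs
            | exact hgb
            | exact abs_nonneg _
            | exact div_nonneg (pow_nonneg (by linarith [hab.le] : (0:ℝ) ≤ b - a) m)
                (by positivity)
            | positivity
      _ = |P y| * M := by rw [hM]
  -- Fubini on the triangle
  obtain ⟨hKIy, hswap⟩ := fubini_triangle hab.le K hKint
  -- continuity of the Taylor polynomial in y
  have hTc : Continuous fun y => taylorWithinEval f m (Icc a b) b y := by
    simp only [taylor_within_apply]
    apply continuous_finset_sum
    intro k _
    exact (continuous_const.mul ((continuous_id.sub continuous_const).pow k)).smul
      continuous_const
  have h1 : IntervalIntegrable (fun y => P y * taylorWithinEval f m (Icc a b) b y) volume a b :=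
    hP.mul_continuousOn hTc.continuousOn
  have h2' : IntervalIntegrable (fun y => ∫ t in y..b, K y t) volume a b := by
    rw [intervalIntegrable_iff_integrableOn_Ioc_of_le hab.le]
    exact hKIy.mono_set Ioc_subset_Icc_self
  have h2 : IntervalIntegrable (fun y => (-1 : ℝ) ^ m * ∫ t in y..b, K y t) volume a b :=
    h2'.const_mul _
  -- Step 1: rewrite the integrand using Taylor
  have E1 : ∫ y in a..b, P y * f y =
      (∫ y in a..b, P y * taylorWithinEval f m (Icc a b) b y) -
      (-1 : ℝ) ^ m * ∫ y in a..b, ∫ t in y..b, K y t := by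
    rw [← intervalIntegral.integral_const_mul, ← integral_sub h1 h2]
    apply integral_congr
    intro y hy
    rw [uIcc_of_le hab.le] at hy
    show P y * f y = P y * taylorWithinEval f m (Icc a b) b y -
      (-1 : ℝ) ^ m * ∫ t in y..b, K y t
    rw [taylor_int_remainder hab hf hy, mul_sub]
    congr 1
    rw [← intervalIntegral.integral_const_mul, ← intervalIntegral.integral_const_mul]
    refine integral_congr (fun t _ => ?_)
    show P y * ((y - t) ^ m / (Nat.factorial m) * iteratedDerivWithin (m + 1) f (Icc a b) t)
      = (-1 : ℝ) ^ m * (P y * (t - y) ^ m / (Nat.factorial m) * g t)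
    rw [show (y - t : ℝ) = -(t - y) by ring, neg_pow]
    ring
  -- Step 2: the Taylor-polynomial part vanishes
  have E2 : ∫ y in a..b, P y * taylorWithinEval f m (Icc a b) b y = 0 := by
    have hrw : ∀ y, P y * taylorWithinEval f m (Icc a b) b y =
        ∑ k ∈ Finset.range (m + 1),
          (P y * (b - y) ^ k / (Nat.factorial k)) *
            ((-1 : ℝ) ^ k * iteratedDerivWithin k f (Icc a b) b) := by
      intro y
      rw [taylor_within_apply, Finset.mul_sum]
      refine Finset.sum_congr rfl (fun k _ => ?_)
      rw [smul_eq_mul, show (y - b : ℝ) = -(b - y) by ring, neg_pow]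
      ring
    rw [integral_congr (fun y _ => hrw y)]
    have hsum := intervalIntegral.integral_finset_sum (μ := volume) (a := a) (b := b)
      (s := Finset.range (m + 1))
      (f := fun k x => P x * (b - x) ^ k / (Nat.factorial k) *
        ((-1 : ℝ) ^ k * iteratedDerivWithin k f (Icc a b) b))
      (fun k _ =>
        ((hP.mul_continuousOn
          (Continuous.continuousOn (by fun_prop))).div_const _).mul_const _)
    rw [hsum]
    refine Finset.sum_eq_zero (fun k hk => ?_)
    rw [intervalIntegral.integral_mul_const, hmom k (Nat.lt_succ_iff.mp (Finset.mem_range.mp hk)), zero_mul]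
  -- Step 3: Fubini and rearrangement
  have E3 : ∫ y in a..b, (∫ t in y..b, K y t) =
      ∫ t in a..b, (∫ y in a..t, P y * (t - y) ^ m / (Nat.factorial m)) * g t := by
    rw [hswap]
    apply integral_congr
    intro t _
    exact integral_mul_const _ _
  have E4 : ∫ t in a..b,
      (∫ y in a..t, P y * (t - y) ^ m / (Nat.factorial m)) * ((-1 : ℝ) ^ (m + 1) * g t)
      = -((-1 : ℝ) ^ m) *
        ∫ t in a..b, (∫ y in a..t, P y * (t - y) ^ m / (Nat.factorial m)) * g t := by
    rw [← intervalIntegral.integral_const_mul]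
    exact integral_congr (fun t _ => by rw [pow_succ]; ring)
  have hfinal : 0 ≤ ∫ t in a..b,
      (∫ y in a..t, P y * (t - y) ^ m / (Nat.factorial m)) * ((-1 : ℝ) ^ (m + 1) * g t) := by
    apply intervalIntegral.integral_nonneg hab.le
    intro u hu
    exact mul_nonneg (hpos u hu) (hsign u hu)
  rw [E4] at hfinal
  rw [E1, E2, E3]
  linarith
end

section
/- Let P be integrable on [a,b] and m a nonnegative integer. If ∫_a^b P(y)f(y) dy ≥ 0 holds for every f ∈ C^{m+1}([a,b]) with (-1)^{m+1}f^{(m+1)} ≥ 0 on [a,b], then ∫_a^b P(y)(b-y)^i/i! dy = 0 for all i ∈ {0,...,m} and ∫_a^s P(y)(s-y)^m/m! dy ≥ 0 for all s ∈ [a,b]. -/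
open MeasureTheory intervalIntegral Set

lemma swap_tri {a b : ℝ} (hab : a ≤ b) {Q : ℝ → ℝ} (hQ : IntervalIntegrable Q volume a b)
    {K : ℝ × ℝ → ℝ} (hK : Continuous K) :
    (∫ t in a..b, ∫ y in a..t, Q y * K (t, y)) = ∫ y in a..b, Q y * ∫ t in y..b, K (t, y) := by
  set μ : Measure ℝ := volume.restrict (Ioc a b) with hμ
  have hQi : IntegrableOn Q (Ioc a b) := (intervalIntegrable_iff_integrableOn_Ioc_of_le hab).1 hQ
  obtain ⟨C, hC⟩ : ∃ C, ∀ p ∈ Icc a b ×ˢ Icc a b, ‖K p‖ ≤ C :=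
    (isCompact_Icc.prod isCompact_Icc).exists_bound_of_continuousOn hK.continuousOn
  set g : ℝ × ℝ → ℝ := fun p => {p : ℝ × ℝ | p.2 ≤ p.1}.indicator (fun p => Q p.2 * K p) p with hg
  have hmeas_set : MeasurableSet {p : ℝ × ℝ | p.2 ≤ p.1} :=
    measurableSet_le measurable_snd measurable_fst
  have hQm : AEStronglyMeasurable (fun p : ℝ × ℝ => Q p.2) (μ.prod μ) :=
    hQi.aestronglyMeasurable.comp_quasiMeasurePreserving Measure.quasiMeasurePreserving_snd
  have hgm : AEStronglyMeasurable g (μ.prod μ) :=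
    (hQm.mul hK.aestronglyMeasurable).indicator hmeas_set
  have hfin : μ Set.univ ≠ ⊤ := by
    rw [hμ, Measure.restrict_apply_univ]
    exact (measure_Ioc_lt_top).ne
  have hint : Integrable g (μ.prod μ) := by
    have h1 : Integrable (fun y => ‖Q y‖) μ := hQi.norm
    have h2 : Integrable (fun y => ‖Q y‖) (Measure.map Prod.snd (μ.prod μ)) := by
      rw [Measure.map_snd_prod]
      exact h1.smul_measure hfin
    have h3 : Integrable (fun p : ℝ × ℝ => ‖Q p.2‖) (μ.prod μ) :=
      h2.comp_measurable measurable_snd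
    have hdom : Integrable (fun p : ℝ × ℝ => ‖Q p.2‖ * max C 0) (μ.prod μ) :=
      h3.mul_const _
    refine hdom.mono' hgm ?_
    have hae : ∀ᵐ p ∂(μ.prod μ), p ∈ Ioc a b ×ˢ Ioc a b := by
      rw [hμ, Measure.prod_restrict]
      exact ae_restrict_mem (measurableSet_Ioc.prod measurableSet_Ioc)
    filter_upwards [hae] with p hp
    have hb1 : ‖g p‖ ≤ ‖Q p.2 * K p‖ := norm_indicator_le_norm_self _ _
    rw [norm_mul] at hb1
    refine hb1.trans ?_
    have : ‖K p‖ ≤ max C 0 :=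
      le_trans (hC p ⟨Ioc_subset_Icc_self hp.1, Ioc_subset_Icc_self hp.2⟩) (le_max_left _ _)
    exact mul_le_mul_of_nonneg_left this (norm_nonneg _)
  have hswap := MeasureTheory.integral_integral_swap (μ := μ) (ν := μ)
      (f := fun t y => g (t, y)) (by exact hint)
  rw [integral_of_le hab, integral_of_le hab]
  calc ∫ t in Ioc a b, (∫ y in a..t, Q y * K (t, y)) ∂volume
      = ∫ t in Ioc a b, (∫ y, g (t, y) ∂μ) ∂volume := by
        refine setIntegral_congr_fun measurableSet_Ioc (fun t ht => ?_)
        have h1 : (fun y => g (t, y)) = (Iic t).indicator (fun y => Q y * K (t, y)) := by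
          funext y
          simp only [hg, Set.indicator_apply, Set.mem_setOf_eq, Set.mem_Iic]
        rw [h1, MeasureTheory.integral_indicator measurableSet_Iic, hμ,
          Measure.restrict_restrict measurableSet_Iic]
        have h2 : Iic t ∩ Ioc a b = Ioc a t := by
          ext u
          simp only [mem_inter_iff, mem_Iic, mem_Ioc]
          constructor
          · rintro ⟨h1', h2', _⟩; exact ⟨h2', h1'⟩
          · rintro ⟨h1', h2'⟩; exact ⟨h2', h1', h2'.trans ht.2⟩
        rw [h2, integral_of_le ht.1.le]
    _ = ∫ y, (∫ t, g (t, y) ∂μ) ∂μ := hswap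
    _ = ∫ y in Ioc a b, Q y * ∫ t in y..b, K (t, y) ∂volume := by
        refine setIntegral_congr_fun measurableSet_Ioc (fun y hy => ?_)
        have h1 : (fun t => g (t, y)) = (Ici y).indicator (fun t => Q y * K (t, y)) := by
          funext t
          simp only [hg, Set.indicator_apply, Set.mem_setOf_eq, Set.mem_Ici]
        rw [h1, MeasureTheory.integral_indicator measurableSet_Ici, hμ,
          Measure.restrict_restrict measurableSet_Ici]
        have h2 : Ici y ∩ Ioc a b = Icc y b := by
          ext u
          simp only [mem_inter_iff, mem_Ici, mem_Ioc, mem_Icc]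
          constructor
          · rintro ⟨h1', _, h3'⟩; exact ⟨h1', h3'⟩
          · rintro ⟨h1', h2'⟩; exact ⟨h1', lt_of_lt_of_le hy.1 h1', h2'⟩
        rw [h2, integral_Icc_eq_integral_Ioc, ← integral_of_le hy.2,
          intervalIntegral.integral_const_mul]

noncomputable def prim (b : ℝ) (g : ℝ → ℝ) : ℝ → ℝ := fun y => ∫ t in y..b, g t

noncomputable def iterPrim (b : ℝ) (h : ℝ → ℝ) : ℕ → ℝ → ℝ
  | 0 => h
  | k + 1 => prim b (iterPrim b h k)

lemma hasDerivAt_prim {g : ℝ → ℝ} (hg : Continuous g) (b y : ℝ) :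
    HasDerivAt (prim b g) (-(g y)) y := by
  have h1 : HasDerivAt (fun u => ∫ t in b..u, g t) (g y) y :=
    intervalIntegral.integral_hasDerivAt_right (hg.intervalIntegrable b y)
      (hg.stronglyMeasurable.stronglyMeasurableAtFilter) hg.continuousAt
  have h2 := h1.neg
  have h3 : prim b g = fun u => -∫ t in b..u, g t := by
    funext u
    rw [prim, intervalIntegral.integral_symm]
  rw [h3]
  exact h2

lemma continuous_iterPrim {h : ℝ → ℝ} (hh : Continuous h) (b : ℝ) :
    ∀ k, Continuous (iterPrim b h k)
  | 0 => hh
  | k + 1 => by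
    have : ∀ y, HasDerivAt (iterPrim b h (k + 1)) (-(iterPrim b h k y)) y :=
      fun y => hasDerivAt_prim (continuous_iterPrim hh b k) b y
    exact (Differentiable.continuous fun y => (this y).differentiableAt)

lemma deriv_iterPrim {h : ℝ → ℝ} (hh : Continuous h) (b : ℝ) (k : ℕ) :
    deriv (iterPrim b h (k + 1)) = fun y => -(iterPrim b h k y) := by
  funext y
  exact (hasDerivAt_prim (continuous_iterPrim hh b k) b y).deriv

lemma contDiff_iterPrim {h : ℝ → ℝ} (hh : Continuous h) (b : ℝ) :
    ∀ k : ℕ, ContDiff ℝ (k : ℕ) (iterPrim b h k)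
  | 0 => contDiff_zero.2 hh
  | k + 1 => by
    have hcast : ((k + 1 : ℕ) : WithTop ℕ∞) = (k : ℕ) + 1 := by norm_cast
    rw [hcast, contDiff_succ_iff_deriv]
    refine ⟨fun y => ((hasDerivAt_prim (continuous_iterPrim hh b k) b y).differentiableAt), ?_, ?_⟩
    · intro hω
      simp at hω
    · rw [deriv_iterPrim hh b k]
      exact (contDiff_iterPrim hh b k).neg

lemma iteratedDeriv_iterPrim {h : ℝ → ℝ} (hh : Continuous h) (b : ℝ) :
    ∀ k : ℕ, iteratedDeriv k (iterPrim b h k) = fun y => (-1 : ℝ) ^ k * h y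
  | 0 => by funext y; simp [iterPrim]
  | k + 1 => by
    rw [iteratedDeriv_succ', deriv_iterPrim hh b k]
    funext y
    rw [iteratedDeriv_fun_neg, show (iteratedDeriv k (iterPrim b h k) y)
        = (-1 : ℝ) ^ k * h y from congrFun (iteratedDeriv_iterPrim hh b k) y]
    ring

lemma iterPrim_one (b : ℝ) :
    ∀ k : ℕ, iterPrim b (fun _ => (1 : ℝ)) k = fun y => (b - y) ^ k / (Nat.factorial k : ℝ)
  | 0 => by funext y; simp [iterPrim]
  | k + 1 => by
    funext y
    show prim b (iterPrim b (fun _ => (1 : ℝ)) k) y = _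
    rw [prim, iterPrim_one b k]
    have h1 : (∫ t in y..b, (b - t) ^ k / (Nat.factorial k : ℝ))
        = (∫ t in y..b, (b - t) ^ k) / (Nat.factorial k : ℝ) := intervalIntegral.integral_div _ _
    have h2 : (∫ t in y..b, (b - t) ^ k) = (b - y) ^ (k + 1) / (k + 1 : ℝ) := by
      rw [intervalIntegral.integral_comp_sub_left (fun u => u ^ k) b]
      rw [sub_self, integral_pow]
      rw [zero_pow (Nat.succ_ne_zero k)]
      ring
    rw [h1, h2, Nat.factorial_succ]
    have hk : (Nat.factorial k : ℝ) ≠ 0 := Nat.cast_ne_zero.2 (Nat.factorial_ne_zero k)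
    have hk1 : (k + 1 : ℝ) ≠ 0 := by positivity
    push_cast
    field_simp

lemma int_pow' (c d : ℝ) (k : ℕ) :
    ∫ u in c..d, (u - c) ^ k / (Nat.factorial k : ℝ)
      = (d - c) ^ (k + 1) / (Nat.factorial (k + 1) : ℝ) := by
  rw [intervalIntegral.integral_div]
  rw [intervalIntegral.integral_comp_sub_right (fun u => u ^ k) c]
  rw [sub_self, integral_pow, zero_pow (Nat.succ_ne_zero k), sub_zero, Nat.factorial_succ]
  have hk : (Nat.factorial k : ℝ) ≠ 0 := Nat.cast_ne_zero.2 (Nat.factorial_ne_zero k)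
  have hk1 : (k + 1 : ℝ) ≠ 0 := by positivity
  push_cast
  field_simp

lemma int_pow (c d : ℝ) (k : ℕ) :
    ∫ u in c..d, (d - u) ^ k / (Nat.factorial k : ℝ)
      = (d - c) ^ (k + 1) / (Nat.factorial (k + 1) : ℝ) := by
  rw [intervalIntegral.integral_div]
  rw [intervalIntegral.integral_comp_sub_left (fun u => u ^ k) d]
  rw [sub_self, integral_pow, zero_pow (Nat.succ_ne_zero k), sub_zero, Nat.factorial_succ]
  have hk : (Nat.factorial k : ℝ) ≠ 0 := Nat.cast_ne_zero.2 (Nat.factorial_ne_zero k)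
  have hk1 : (k + 1 : ℝ) ≠ 0 := by positivity
  push_cast
  field_simp

lemma idw_eq {s : Set ℝ} (hs : UniqueDiffOn ℝ s) :
    ∀ (n : ℕ) {f : ℝ → ℝ}, ContDiff ℝ (n : ℕ) f → ∀ {x : ℝ}, x ∈ s →
      iteratedDerivWithin n f s x = iteratedDeriv n f x := by
  intro n
  induction n with
  | zero => intro f _ x _; simp
  | succ n ih =>
    intro f hf x hx
    have hf' : ContDiff ℝ ((n : WithTop ℕ∞) + 1) f := by exact_mod_cast hf
    have hd : Differentiable ℝ f := hf'.differentiable (by simp)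
    have h1 : Set.EqOn (derivWithin f s) (deriv f) s := fun y hy =>
      (hd y).derivWithin (hs.uniqueDiffWithinAt hy)
    rw [iteratedDerivWithin_succ', iteratedDeriv_succ',
      iteratedDerivWithin_congr h1 hx]
    exact ih ((contDiff_succ_iff_deriv.1 hf').2.2) hx

lemma iteratedDeriv_eventually_zero {f : ℝ → ℝ} {i : ℕ} {c : ℝ}
    (hc : iteratedDeriv i f = fun _ => c) :
    ∀ j, iteratedDeriv (i + j + 1) f = fun _ => 0 := by
  intro j
  induction j with
  | zero => rw [iteratedDeriv_succ, hc]; funext y; simp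
  | succ j ihj =>
    rw [show i + (j + 1) + 1 = (i + j + 1) + 1 by ring, iteratedDeriv_succ, ihj]
    funext y; simp

lemma cauchy {a : ℝ} {P : ℝ → ℝ} (k : ℕ) {t : ℝ} (hat : a ≤ t)
    (hP : IntervalIntegrable P volume a t) :
    (∫ u in a..t, (∫ y in a..u, P y * ((u - y) ^ k / (Nat.factorial k : ℝ))))
      = ∫ y in a..t, P y * ((t - y) ^ (k + 1) / (Nat.factorial (k + 1) : ℝ)) := by
  have hK : Continuous fun p : ℝ × ℝ => (p.1 - p.2) ^ k / (Nat.factorial k : ℝ) :=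
    ((continuous_fst.sub continuous_snd).pow k).div_const _
  rw [swap_tri hat hP hK]
  simp only [int_pow']

lemma pair {a b : ℝ} (hab : a ≤ b) {h : ℝ → ℝ} (hh : Continuous h) :
    ∀ (k : ℕ) (Q : ℝ → ℝ), IntervalIntegrable Q volume a b →
      (∫ y in a..b, Q y * iterPrim b h (k + 1) y)
        = ∫ t in a..b, (∫ y in a..t, Q y * ((t - y) ^ k / (Nat.factorial k : ℝ))) * h t := by
  intro k
  induction k with
  | zero =>
    intro Q hQ
    have hK : Continuous fun p : ℝ × ℝ => h p.1 := hh.comp continuous_fst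
    have hs := swap_tri hab hQ hK
    have hl : (∫ y in a..b, Q y * iterPrim b h 1 y)
        = ∫ y in a..b, Q y * ∫ t in y..b, h t := by
      simp only [iterPrim, prim]
    rw [hl, ← hs]
    refine intervalIntegral.integral_congr fun t ht => ?_
    simp only [pow_zero, Nat.factorial_zero, Nat.cast_one, div_one, mul_one]
    rw [intervalIntegral.integral_mul_const]
  | succ k ih =>
    intro Q hQ
    have hcont := continuous_iterPrim hh b (k + 1)
    have hK : Continuous fun p : ℝ × ℝ => iterPrim b h (k + 1) p.1 :=
      hcont.comp continuous_fst
    have hs := swap_tri hab hQ hK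
    have hl : (∫ y in a..b, Q y * iterPrim b h (k + 2) y)
        = ∫ y in a..b, Q y * ∫ t in y..b, iterPrim b h (k + 1) t := by
      simp only [iterPrim, prim]
    rw [hl, ← hs]
    set Qt : ℝ → ℝ := fun t => ∫ y in a..t, Q y with hQt
    have h2 : (∫ t in a..b, ∫ y in a..t, Q y * iterPrim b h (k + 1) t)
        = ∫ y in a..b, Qt y * iterPrim b h (k + 1) y := by
      refine intervalIntegral.integral_congr fun t ht => ?_
      rw [intervalIntegral.integral_mul_const]
    have hQtc : ContinuousOn Qt (uIcc a b) := by
      refine continuousOn_primitive_interval ?_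
      rw [uIcc_of_le hab]
      exact (intervalIntegrable_iff_integrableOn_Icc_of_le hab).1 hQ
    have hQti : IntervalIntegrable Qt volume a b := hQtc.intervalIntegrable
    rw [h2, ih Qt hQti]
    refine intervalIntegral.integral_congr fun t ht => ?_
    rw [uIcc_of_le hab] at ht
    congr 1
    have hQat : IntervalIntegrable Q volume a t := by
      refine hQ.mono_set ?_
      rw [uIcc_of_le ht.1, uIcc_of_le hab]
      exact Icc_subset_Icc_right ht.2
    have hK2 : Continuous fun p : ℝ × ℝ => (t - p.1) ^ k / (Nat.factorial k : ℝ) :=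
      ((continuous_const.sub continuous_fst).pow k).div_const _
    have h4 : (∫ y in a..t, Qt y * ((t - y) ^ k / (Nat.factorial k : ℝ)))
        = ∫ y in a..t, ∫ u in a..y, Q u * ((t - y) ^ k / (Nat.factorial k : ℝ)) := by
      refine intervalIntegral.integral_congr fun y _ => ?_
      rw [intervalIntegral.integral_mul_const]
    rw [h4, swap_tri ht.1 hQat hK2]
    simp only [int_pow]

lemma contF {a b : ℝ} (hab : a ≤ b) {P : ℝ → ℝ} (hP : IntervalIntegrable P volume a b) :
    ∀ k : ℕ, ContinuousOn
      (fun t => ∫ y in a..t, P y * ((t - y) ^ k / (Nat.factorial k : ℝ))) (Icc a b) := by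
  intro k
  have hPab : ∀ t ∈ Icc a b, IntervalIntegrable P volume a t := by
    intro t ht
    refine hP.mono_set ?_
    rw [uIcc_of_le ht.1, uIcc_of_le hab]
    exact Icc_subset_Icc_right ht.2
  induction k with
  | zero =>
    have h1 : ∀ t : ℝ, (∫ y in a..t, P y * ((t - y) ^ 0 / (Nat.factorial 0 : ℝ)))
        = ∫ y in a..t, P y := by
      intro t
      refine intervalIntegral.integral_congr fun y _ => by simp
    have h2 := continuousOn_primitive_interval (a := a) (b := b) (μ := volume) (f := P) ?_
    · rw [uIcc_of_le hab] at h2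
      exact h2.congr fun t _ => h1 t
    · rw [uIcc_of_le hab]
      exact (intervalIntegrable_iff_integrableOn_Icc_of_le hab).1 hP
  | succ k ih =>
    have hint : IntegrableOn
        (fun u => ∫ y in a..u, P y * ((u - y) ^ k / (Nat.factorial k : ℝ))) (uIcc a b) volume := by
      rw [uIcc_of_le hab]
      exact ih.integrableOn_compact isCompact_Icc
    have h2 := continuousOn_primitive_interval hint
    rw [uIcc_of_le hab] at h2
    exact h2.congr fun t ht => (cauchy k ht.1 (hPab t ht)).symm

theorem stmt_2 (a b : ℝ) (hab : a < b) (m : ℕ) (P : ℝ → ℝ)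
    (hP : IntervalIntegrable P volume a b)
    (h : ∀ f : ℝ → ℝ, ContDiffOn ℝ (m + 1) f (Set.Icc a b) →
      (∀ y ∈ Set.Icc a b, 0 ≤ (-1 : ℝ) ^ (m + 1) * iteratedDerivWithin (m + 1) f (Set.Icc a b) y) →
      0 ≤ ∫ y in a..b, P y * f y) :
    (∀ i ≤ m, ∫ y in a..b, P y * (b - y) ^ i / (Nat.factorial i) = 0) ∧
    (∀ s ∈ Set.Icc a b, 0 ≤ ∫ y in a..s, P y * (s - y) ^ m / (Nat.factorial m)) := by
  have hab' : a ≤ b := hab.le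
  have hUD : UniqueDiffOn ℝ (Set.Icc a b) := uniqueDiffOn_Icc hab
  have happ : ∀ f : ℝ → ℝ, ContDiff ℝ ((m + 1 : ℕ)) f →
      (∀ y ∈ Set.Icc a b, 0 ≤ (-1 : ℝ) ^ (m + 1) * iteratedDeriv (m + 1) f y) →
      0 ≤ ∫ y in a..b, P y * f y := by
    intro f hf hsign
    refine h f ?_ ?_
    · exact (by exact_mod_cast hf : ContDiff ℝ ((m : WithTop ℕ∞) + 1) f).contDiffOn
    · intro y hy
      rw [idw_eq hUD (m + 1) hf hy]
      exact hsign y hy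
  constructor
  · intro i hi
    have hfsm : ContDiff ℝ ((m + 1 : ℕ)) (fun y : ℝ => (b - y) ^ i / (Nat.factorial i : ℝ)) :=
      ((contDiff_const.sub contDiff_id).pow i).div_const _
    have hconst : iteratedDeriv i (fun y : ℝ => (b - y) ^ i / (Nat.factorial i : ℝ))
        = fun _ => (-1 : ℝ) ^ i * 1 := by
      rw [← iterPrim_one b i]
      exact iteratedDeriv_iterPrim continuous_const b i
    have hzero : iteratedDeriv (m + 1) (fun y : ℝ => (b - y) ^ i / (Nat.factorial i : ℝ))
        = fun _ => 0 := by
      have := iteratedDeriv_eventually_zero hconst (m - i)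
      rwa [show i + (m - i) + 1 = m + 1 by omega] at this
    have h1 : 0 ≤ ∫ y in a..b, P y * ((b - y) ^ i / (Nat.factorial i : ℝ)) := by
      refine happ _ hfsm fun y hy => ?_
      rw [hzero]
      simp
    have hfneg : ContDiff ℝ ((m + 1 : ℕ)) (fun y : ℝ => -((b - y) ^ i / (Nat.factorial i : ℝ))) :=
      hfsm.neg
    have h2 : 0 ≤ ∫ y in a..b, P y * (-((b - y) ^ i / (Nat.factorial i : ℝ))) := by
      refine happ _ hfneg fun y hy => ?_
      rw [iteratedDeriv_fun_neg, hzero]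
      simp
    have h3 : (∫ y in a..b, P y * (-((b - y) ^ i / (Nat.factorial i : ℝ))))
        = -∫ y in a..b, P y * ((b - y) ^ i / (Nat.factorial i : ℝ)) := by
      rw [← intervalIntegral.integral_neg]
      exact intervalIntegral.integral_congr fun y _ => by ring
    have h4 : (∫ y in a..b, P y * ((b - y) ^ i / (Nat.factorial i : ℝ))) = 0 := by
      rw [h3] at h2
      linarith
    have h5 : (∫ y in a..b, P y * (b - y) ^ i / (Nat.factorial i : ℝ))
        = ∫ y in a..b, P y * ((b - y) ^ i / (Nat.factorial i : ℝ)) :=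
      intervalIntegral.integral_congr fun y _ => mul_div_assoc _ _ _
    rw [h5, h4]
  · intro s hs
    have hgoal : (∫ y in a..s, P y * (s - y) ^ m / (Nat.factorial m : ℝ))
        = ∫ y in a..s, P y * ((s - y) ^ m / (Nat.factorial m : ℝ)) :=
      intervalIntegral.integral_congr fun y _ => mul_div_assoc _ _ _
    rw [hgoal]
    by_contra hneg
    push_neg at hneg
    have hFc : ContinuousOn
        (fun t => ∫ y in a..t, P y * ((t - y) ^ m / (Nat.factorial m : ℝ))) (Set.Icc a b) :=
      contF hab' hP m
    have hcw := hFc s hs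
    rw [Metric.continuousWithinAt_iff] at hcw
    obtain ⟨δ, hδ, hball⟩ :=
      hcw ((-∫ y in a..s, P y * ((s - y) ^ m / (Nat.factorial m : ℝ))) / 2) (by linarith)
    set hb : ℝ → ℝ := fun t => max 0 (δ - |t - s|) with hhb
    have hbc : Continuous hb :=
      continuous_const.max (continuous_const.sub (continuous_id.sub continuous_const).abs)
    have hbnn : ∀ t, 0 ≤ hb t := fun t => le_max_left _ _
    have hpos : 0 ≤ ∫ y in a..b, P y * iterPrim b hb (m + 1) y := by
      refine happ _ (contDiff_iterPrim hbc b (m + 1)) fun y hy => ?_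
      rw [show iteratedDeriv (m + 1) (iterPrim b hb (m + 1)) y = (-1 : ℝ) ^ (m + 1) * hb y from
        congrFun (iteratedDeriv_iterPrim hbc b (m + 1)) y]
      have hsq : (-1 : ℝ) ^ (m + 1) * ((-1 : ℝ) ^ (m + 1) * hb y) = hb y := by
        rw [← mul_assoc, ← pow_add]
        have hev : Even ((m + 1) + (m + 1)) := ⟨m + 1, by ring⟩
        rw [hev.neg_one_pow, one_mul]
      rw [hsq]
      exact hbnn y
    rw [pair hab' hbc m P hP] at hpos
    -- hpos : 0 ≤ ∫ t in a..b, (∫ y in a..t, P y * ((t - y) ^ m / m !)) * hb t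
    set Fs : ℝ := ∫ y in a..s, P y * ((s - y) ^ m / (Nat.factorial m : ℝ)) with hFs
    have hFneg : ∀ t ∈ Set.Icc a b, |t - s| < δ →
        (∫ y in a..t, P y * ((t - y) ^ m / (Nat.factorial m : ℝ))) < Fs / 2 := by
      intro t ht htd
      have hd := hball ht (by rwa [Real.dist_eq])
      rw [Real.dist_eq] at hd
      have := (abs_lt.1 hd).2
      linarith
    have hle : ∀ t ∈ Set.Icc a b,
        (∫ y in a..t, P y * ((t - y) ^ m / (Nat.factorial m : ℝ))) * hb t ≤ (Fs / 2) * hb t := by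
      intro t ht
      rcases le_or_gt δ (|t - s|) with hcase | hcase
      · have hz : hb t = 0 := max_eq_left (by linarith)
        rw [hz, mul_zero, mul_zero]
      · exact mul_le_mul_of_nonneg_right (hFneg t ht hcase).le (hbnn t)
    have hFhi : IntervalIntegrable
        (fun t => (∫ y in a..t, P y * ((t - y) ^ m / (Nat.factorial m : ℝ))) * hb t)
        volume a b := by
      refine ContinuousOn.intervalIntegrable ?_
      rw [uIcc_of_le hab']
      exact hFc.mul hbc.continuousOn
    have hchi : IntervalIntegrable (fun t => (Fs / 2) * hb t) volume a b :=
      (continuous_const.mul hbc).intervalIntegrable a b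
    have hmono := intervalIntegral.integral_mono_on hab' hFhi hchi hle
    rw [intervalIntegral.integral_const_mul] at hmono
    have hac : a ≤ max a (s - δ) := le_max_left _ _
    have hdb : min b (s + δ) ≤ b := min_le_left _ _
    have hcd : max a (s - δ) < min b (s + δ) := by
      have h1 : a < min b (s + δ) := lt_min hab (by linarith [hs.1])
      have h2 : s - δ < min b (s + δ) := lt_min (by linarith [hs.2]) (by linarith)
      exact max_lt h1 h2
    have hbpos : 0 < ∫ t in max a (s - δ)..min b (s + δ), hb t := by
      refine intervalIntegral_pos_of_pos_on (hbc.intervalIntegrable _ _) ?_ hcd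
      intro x hx
      have h1 : s - δ < x := lt_of_le_of_lt (le_max_right _ _) hx.1
      have h2 : x < s + δ := lt_of_lt_of_le hx.2 (min_le_right _ _)
      have h3 : |x - s| < δ := abs_lt.2 ⟨by linarith, by linarith⟩
      exact lt_max_iff.2 (Or.inr (by linarith))
    have hsplit : (∫ t in max a (s - δ)..min b (s + δ), hb t) ≤ ∫ t in a..b, hb t := by
      have i1 : IntervalIntegrable hb volume a (max a (s - δ)) := hbc.intervalIntegrable _ _
      have i2 : IntervalIntegrable hb volume (max a (s - δ)) (min b (s + δ)) :=
        hbc.intervalIntegrable _ _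
      have i3 : IntervalIntegrable hb volume (min b (s + δ)) b := hbc.intervalIntegrable _ _
      have e1 := intervalIntegral.integral_add_adjacent_intervals i1 i2
      have e2 := intervalIntegral.integral_add_adjacent_intervals (i1.trans i2) i3
      have n1 : 0 ≤ ∫ t in a..max a (s - δ), hb t :=
        intervalIntegral.integral_nonneg hac fun u _ => hbnn u
      have n3 : 0 ≤ ∫ t in min b (s + δ)..b, hb t :=
        intervalIntegral.integral_nonneg hdb fun u _ => hbnn u
      linarith
    have hlt : (Fs / 2) * ∫ t in a..b, hb t < 0 :=
      mul_neg_of_neg_of_pos (by linarith) (by linarith)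
    linarith
end
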